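/- Let E be the exterior algebra on an n-dimensional vector space over a field K, with maximal graded ideal m. Then the annihilator of the power m^ℓ in E is m^{n-ℓ+1}, for 1 ≤ ℓ ≤ n. -/

import Mathlib

open ExteriorAlgebra Submodule

namespace Stmt11Aux

variable {K : Type*} [Field K] {V : Type*} [AddCommGroup V] [Module K V]

local notation "A" => LinearMap.range (ExteriorAlgebra.ι K (M := V))

local notation "𝔪" => (LinearMap.range (ExteriorAlgebra.ι K (M := V)) *
    (⊤ : Submodule K (ExteriorAlgebra K V)))

lemma A_le_m : (A : Submodule K (ExteriorAlgebra K V)) ≤ 𝔪 := by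
  intro a ha
  simpa using Submodule.mul_mem_mul ha (Submodule.mem_top (x := (1 : ExteriorAlgebra K V)))

lemma m_mul_top_le : (𝔪 : Submodule K (ExteriorAlgebra K V)) * ⊤ ≤ 𝔪 := by
  rw [mul_assoc]
  exact mul_le_mul' le_rfl le_top

lemma mul_ι_mem (x : ExteriorAlgebra K V) (v : V) : x * ExteriorAlgebra.ι K v ∈ 𝔪 := by
  induction x using ExteriorAlgebra.induction generalizing v with
  | algebraMap r =>
    rw [← Algebra.smul_def, ← map_smul]
    exact A_le_m (LinearMap.mem_range_self _ _)
  | ι w =>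
    exact Submodule.mul_mem_mul (LinearMap.mem_range_self _ _) Submodule.mem_top
  | add a b ha hb =>
    rw [add_mul]; exact Submodule.add_mem _ (ha v) (hb v)
  | mul a c ha hc =>
    rw [mul_assoc]
    have hcv := hc v
    refine Submodule.mul_induction_on hcv (fun m hm t _ => ?_) (fun y z hy hz => ?_)
    · obtain ⟨u, rfl⟩ := hm
      rw [← mul_assoc]
      exact m_mul_top_le (Submodule.mul_mem_mul (ha u) Submodule.mem_top)
    · rw [mul_add]; exact Submodule.add_mem _ hy hz

lemma top_mul_A_le : (⊤ : Submodule K (ExteriorAlgebra K V)) * A ≤ 𝔪 := by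
  rw [Submodule.mul_le]
  rintro x - y ⟨v, rfl⟩
  exact mul_ι_mem x v

lemma m_pow_le (k : ℕ) : (𝔪 : Submodule K (ExteriorAlgebra K V)) ^ k ≤ A ^ k * ⊤ := by
  induction k with
  | zero => simpa using le_top
  | succ k ih =>
    calc 𝔪 ^ (k + 1) = 𝔪 ^ k * 𝔪 := pow_succ _ _
      _ ≤ (A ^ k * ⊤) * (A * ⊤) := mul_le_mul' ih le_rfl
      _ = A ^ k * ((⊤ * A) * ⊤) := by rw [mul_assoc, mul_assoc]
      _ ≤ A ^ k * (𝔪 * ⊤) := mul_le_mul' le_rfl (mul_le_mul' top_mul_A_le le_rfl)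
      _ ≤ A ^ k * 𝔪 := mul_le_mul' le_rfl m_mul_top_le
      _ = A ^ (k + 1) * ⊤ := by rw [pow_succ, mul_assoc]

lemma m_pow_anti {a b : ℕ} (hb : 1 ≤ b) (hba : b ≤ a) :
    (𝔪 : Submodule K (ExteriorAlgebra K V)) ^ a ≤ 𝔪 ^ b := by
  obtain ⟨b, rfl⟩ := Nat.exists_eq_add_of_le hb
  have h1 : (𝔪 : Submodule K (ExteriorAlgebra K V)) ^ a = 𝔪 ^ (1 + b) * 𝔪 ^ (a - (1 + b)) := by
    rw [← pow_add, Nat.add_sub_cancel' hba]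
  rw [h1]
  calc 𝔪 ^ (1 + b) * 𝔪 ^ (a - (1 + b)) ≤ 𝔪 ^ (1 + b) * ⊤ := mul_le_mul' le_rfl le_top
    _ = 𝔪 ^ b * (𝔪 * ⊤) := by rw [add_comm, pow_succ, mul_assoc]
    _ ≤ 𝔪 ^ b * 𝔪 := mul_le_mul' le_rfl m_mul_top_le
    _ = 𝔪 ^ (1 + b) := by rw [add_comm, pow_succ]

lemma A_pow_le_m_pow (k : ℕ) : (A : Submodule K (ExteriorAlgebra K V)) ^ k ≤ 𝔪 ^ k := by
  induction k with
  | zero => exact le_rfl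
  | succ k ih =>
    rw [pow_succ, pow_succ]
    exact mul_le_mul' ih A_le_m


section Basis

variable {n : ℕ} (b : Module.Basis (Fin n) K V)

noncomputable def fam (S : Finset (Fin n)) : Fin S.card → V :=
  fun i => b (S.orderIsoOfFin rfl i)

noncomputable def eps (S : Finset (Fin n)) : ExteriorAlgebra K V :=
  ιMulti K S.card (fam b S)

lemma ιMulti_mul_ιMulti {a c : ℕ} (v : Fin a → V) (w : Fin c → V) :
    (ιMulti K a v : ExteriorAlgebra K V) * ιMulti K c w = ιMulti K (a + c) (Fin.append v w) := by
  rw [ιMulti_apply, ιMulti_apply, ιMulti_apply, List.ofFn_add, List.prod_append]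
  simp [Fin.append_left, Fin.append_right]

/-- the "top coefficient" functional on the exterior algebra -/
noncomputable def lamTop : ExteriorAlgebra K V →ₗ[K] K :=
  liftAlternating (fun i =>
    if h : i = n then (b.det).domDomCongr (finCongr h.symm) else 0)

lemma lamTop_ιMulti_ne {i : ℕ} (hi : i ≠ n) (v : Fin i → V) :
    lamTop b (ιMulti K i v) = 0 := by
  rw [lamTop, liftAlternating_apply_ιMulti, dif_neg hi]
  rfl

lemma lamTop_ιMulti_eq (v : Fin n → V) :
    lamTop b (ιMulti K n v) = b.det v := by
  rw [lamTop, liftAlternating_apply_ιMulti, dif_pos rfl]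
  rfl

/-- disjointness: overlapping monomials multiply to zero -/
lemma eps_mul_eps_eq_zero {S T : Finset (Fin n)} {t : Fin n} (hS : t ∈ S) (hT : t ∈ T) :
    (eps b S : ExteriorAlgebra K V) * eps b T = 0 := by
  rw [eps, eps, ιMulti_mul_ιMulti]
  set i0 : Fin (S.card + T.card) := Fin.castAdd T.card ((S.orderIsoOfFin rfl).symm ⟨t, hS⟩)
  set j0 : Fin (S.card + T.card) := Fin.natAdd S.card ((T.orderIsoOfFin rfl).symm ⟨t, hT⟩)
  refine AlternatingMap.map_eq_zero_of_eq _ _ (i := i0) (j := j0) ?_ ?_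
  · show Fin.append (fam b S) (fam b T) i0 = Fin.append (fam b S) (fam b T) j0
    rw [Fin.append_left, Fin.append_right]
    simp [fam]
  · intro h
    have := congrArg Fin.val h
    simp only [i0, j0, Fin.coe_castAdd, Fin.coe_natAdd] at this
    have h1 := ((S.orderIsoOfFin rfl).symm ⟨t, hS⟩).isLt
    omega

lemma comp_append {α β : Type*} {a c : ℕ} (g : α → β) (p : Fin a → α) (q : Fin c → α) :
    g ∘ Fin.append p q = Fin.append (g ∘ p) (g ∘ q) := by
  funext i
  induction i using Fin.addCases with
  | left i => simp [Fin.append_left]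
  | right i => simp [Fin.append_right]

lemma ιMulti_cast {a c : ℕ} (h : a = c) (v : Fin a → V) :
    (ιMulti K c (v ∘ finCongr h.symm) : ExteriorAlgebra K V) = ιMulti K a v := by
  subst h; rfl

/-- the top pairing of a monomial with its complement is nonzero -/
lemma lamTop_eps_mul_eps_compl_ne_zero (T : Finset (Fin n)) :
    lamTop b (eps b T * eps b Tᶜ) ≠ 0 := by
  rw [eps, eps, ιMulti_mul_ιMulti]
  have hc : T.card + Tᶜ.card = n := by simpa using Finset.card_add_card_compl T
  -- the combined family is b composed with an injection Fin (T.card+Tᶜ.card) → Fin n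
  set p : Fin T.card → Fin n := fun i => (T.orderIsoOfFin rfl i : Fin n) with hp
  set q : Fin Tᶜ.card → Fin n := fun i => (Tᶜ.orderIsoOfFin rfl i : Fin n) with hq
  have hfam : Fin.append (fam b T) (fam b Tᶜ) = b ∘ Fin.append p q := by
    rw [comp_append]; rfl
  have hinj : Function.Injective (Fin.append p q) := by
    intro i j h
    induction i using Fin.addCases with
    | left i =>
      induction j using Fin.addCases with
      | left j =>
        rw [Fin.append_left, Fin.append_left] at h
        have : i = j := by
          apply (T.orderIsoOfFin rfl).injective; exact Subtype.ext h
        rw [this]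
      | right j =>
        rw [Fin.append_left, Fin.append_right] at h
        exfalso
        have h1 : (Fin.append p q (Fin.castAdd _ i)) ∈ T := by
          rw [Fin.append_left]; exact (T.orderIsoOfFin rfl i).2
        have h2 : p i ∈ Tᶜ := by rw [h]; exact (Tᶜ.orderIsoOfFin rfl j).2
        rw [Fin.append_left] at h1
        exact (Finset.mem_compl.mp h2) h1
    | right i =>
      induction j using Fin.addCases with
      | left j =>
        rw [Fin.append_right, Fin.append_left] at h
        exfalso
        have h2 : q i ∈ Tᶜ := (Tᶜ.orderIsoOfFin rfl i).2
        have h1 : q i ∈ T := by rw [h]; exact (T.orderIsoOfFin rfl j).2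
        exact (Finset.mem_compl.mp h2) h1
      | right j =>
        rw [Fin.append_right, Fin.append_right] at h
        have : i = j := by
          apply (Tᶜ.orderIsoOfFin rfl).injective; exact Subtype.ext h
        rw [this]
  -- transport along hc
  rw [← ιMulti_cast hc (Fin.append (fam b T) (fam b Tᶜ)), lamTop_ιMulti_eq]
  have hτinj : Function.Injective (Fin.append p q ∘ finCongr hc.symm) :=
    hinj.comp (finCongr hc.symm).injective
  have hbij : Function.Bijective (Fin.append p q ∘ finCongr hc.symm) :=
    Finite.injective_iff_bijective.mp hτinj
  set σ : Equiv.Perm (Fin n) := Equiv.ofBijective _ hbij with hσ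
  have hfam2 : (Fin.append (fam b T) (fam b Tᶜ)) ∘ finCongr hc.symm = ⇑b ∘ ⇑σ := by
    rw [hfam]; rfl
  rw [hfam2, AlternatingMap.map_perm, Module.Basis.det_self]
  rcases Int.units_eq_one_or (Equiv.Perm.sign σ) with h | h <;> rw [h] <;> simp

/-- a reindexing lemma: any injective enumeration of `S` by basis vectors equals
`fam b S` up to a permutation -/
lemma exists_perm_fam (S : Finset (Fin n)) (r : Fin S.card → Fin n)
    (hr : Function.Injective r) (hmem : ∀ i, r i ∈ S) :
    ∃ σ : Equiv.Perm (Fin S.card), (fun i => b (r i)) = fam b S ∘ σ := by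
  have hφinj : Function.Injective (fun i => (S.orderIsoOfFin rfl).symm ⟨r i, hmem i⟩) := by
    intro i j h
    apply hr
    have := congrArg (fun z => ((S.orderIsoOfFin rfl) z : Fin n)) h
    simpa using this
  refine ⟨Equiv.ofBijective _ (Finite.injective_iff_bijective.mp hφinj), ?_⟩
  funext i
  simp [fam, Equiv.ofBijective]

lemma ιMulti_basis_mem_span {d : ℕ} (r : Fin d → Fin n) (hr : Function.Injective r) :
    (ιMulti K d (fun i => b (r i)) : ExteriorAlgebra K V) ∈
      Submodule.span K (Set.range (eps b)) := by
  have hcard : (Finset.image r Finset.univ).card = d := by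
    rw [Finset.card_image_of_injective _ hr, Finset.card_univ, Fintype.card_fin]
  set S := Finset.image r Finset.univ with hS
  clear_value S
  subst hcard
  obtain ⟨σ, hσ⟩ := exists_perm_fam b S r hr (fun i => by
    rw [hS]; exact Finset.mem_image_of_mem _ (Finset.mem_univ i))
  rw [hσ]
  rw [show ((ιMulti K S.card) fun i => (fam b S ∘ σ) i) = (ιMulti K S.card) (fam b S ∘ σ) from rfl,
    AlternatingMap.map_perm]
  exact Submodule.smul_mem _ _ (Submodule.subset_span ⟨S, rfl⟩)

lemma ιMulti_mem_span {d : ℕ} (v : Fin d → V) :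
    (ιMulti K d v : ExteriorAlgebra K V) ∈ Submodule.span K (Set.range (eps b)) := by
  have hv : (ιMulti K d v : ExteriorAlgebra K V)
      = ∑ r : Fin d → Fin n, (∏ j, b.repr (v j) (r j)) • ιMulti K d (fun j => b (r j)) := by
    have h1 : (ιMulti K d v : ExteriorAlgebra K V)
        = (ιMulti K d (M := V)).toMultilinearMap (fun j => ∑ t, b.repr (v j) t • b t) := by
      show (ιMulti K d (M := V)) v = (ιMulti K d (M := V)) (fun j => ∑ t, b.repr (v j) t • b t)
      congr 1; funext j; rw [b.sum_repr]
    rw [h1, MultilinearMap.map_sum]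
    refine Finset.sum_congr rfl fun r _ => ?_
    exact (ιMulti K d (M := V)).toMultilinearMap.map_smul_univ
      (fun j => b.repr (v j) (r j)) (fun j => b (r j))
  rw [hv]
  refine Submodule.sum_mem _ fun r _ => Submodule.smul_mem _ _ ?_
  by_cases hr : Function.Injective r
  · exact ιMulti_basis_mem_span b r hr
  · obtain ⟨i, j, hij, hne⟩ := Function.not_injective_iff.mp hr
    have : (ιMulti K d (M := V)) (fun j => b (r j)) = 0 :=
      AlternatingMap.map_eq_zero_of_eq _ _ (by rw [hij]) hne
    rw [this]
    exact Submodule.zero_mem _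

lemma span_eps : Submodule.span K (Set.range (eps b)) = ⊤ := by
  rw [eq_top_iff, ← ιMulti_span (R := K) (M := V), Submodule.span_le]
  rintro _ ⟨⟨d, v⟩, rfl⟩
  exact ιMulti_mem_span b v


lemma eps_mem (S : Finset (Fin n)) : eps b S ∈ (A : Submodule K (ExteriorAlgebra K V)) ^ S.card :=
  ExteriorAlgebra.ιMulti_range K S.card ⟨fam b S, rfl⟩

lemma lamTop_sum_mul (c : Finset (Fin n) → K) (T : Finset (Fin n)) :
    lamTop b ((∑ S, c S • eps b S) * eps b Tᶜ) = c T * lamTop b (eps b T * eps b Tᶜ) := by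
  rw [Finset.sum_mul, map_sum]
  rw [Finset.sum_eq_single T]
  · rw [smul_mul_assoc, map_smul, smul_eq_mul]
  · intro S _ hST
    by_cases hd : ∃ t, t ∈ S ∧ t ∈ Tᶜ
    · obtain ⟨t, h1, h2⟩ := hd
      rw [smul_mul_assoc, eps_mul_eps_eq_zero b h1 h2, smul_zero, map_zero]
    · have hsub : S ⊆ T := by
        intro t ht
        by_contra h
        exact hd ⟨t, ht, Finset.mem_compl.mpr h⟩
      have hlt : S.card < T.card :=
        Finset.card_lt_card (Finset.ssubset_iff_subset_ne.mpr ⟨hsub, hST⟩)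
      have hne : S.card + Tᶜ.card ≠ n := by
        have h3 : T.card + Tᶜ.card = n := by simpa using Finset.card_add_card_compl T
        omega
      rw [smul_mul_assoc, map_smul, eps, eps, ιMulti_mul_ιMulti, lamTop_ιMulti_ne b hne,
        smul_zero]
  · intro h
    exact absurd (Finset.mem_univ T) h

end Basis

lemma A_pow_eq_bot [FiniteDimensional K V] {n : ℕ} (hn : Module.finrank K V = n) :
    (A : Submodule K (ExteriorAlgebra K V)) ^ (n + 1) = ⊥ := by
  apply le_bot_iff.mp
  rw [show (A : Submodule K (ExteriorAlgebra K V)) ^ (n+1) = ⋀[K]^(n+1) V from rfl,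
    ← ιMulti_span_fixedDegree K (n+1), Submodule.span_le]
  rintro _ ⟨v, rfl⟩
  rw [SetLike.mem_coe, Submodule.mem_bot]
  apply AlternatingMap.map_linearDependent
  intro hli
  have := hli.fintype_card_le_finrank
  rw [Fintype.card_fin, hn] at this
  omega

end Stmt11Aux

open Stmt11Aux in
/-- In the exterior algebra `E` on an `n`-dimensional vector space, the annihilator
of the power `m^ℓ` of the maximal (augmentation) ideal `m` equals `m^(n-ℓ+1)`,
for `1 ≤ ℓ ≤ n`.  Here `m` is realized as the `K`-submodule `V·E` of elements with
zero constant term, and powers are taken as submodule powers (so `m^ℓ = Λ^{≥ℓ}`). -/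
theorem stmt11 (K : Type*) [Field K] (V : Type*) [AddCommGroup V] [Module K V]
    [FiniteDimensional K V] (n ℓ : ℕ) (hn : Module.finrank K V = n)
    (hℓ1 : 1 ≤ ℓ) (hℓn : ℓ ≤ n) :
    ∀ x : ExteriorAlgebra K V,
      (∀ y ∈ ((LinearMap.range (ExteriorAlgebra.ι K (M := V)) *
          (⊤ : Submodule K (ExteriorAlgebra K V))) ^ ℓ), x * y = 0) ↔
      x ∈ ((LinearMap.range (ExteriorAlgebra.ι K (M := V)) *
          (⊤ : Submodule K (ExteriorAlgebra K V))) ^ (n - ℓ + 1)) := by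
  intro x
  set m : Submodule K (ExteriorAlgebra K V) :=
    LinearMap.range (ExteriorAlgebra.ι K (M := V)) * ⊤ with hm
  constructor
  · intro hx
    obtain ⟨b⟩ : Nonempty (Module.Basis (Fin n) K V) := ⟨Module.finBasisOfFinrankEq K V hn⟩
    have hx' : x ∈ Submodule.span K (Set.range (eps b)) := by
      rw [span_eps]; trivial
    obtain ⟨c, hc⟩ := (mem_span_range_iff_exists_fun K).mp hx'
    have key : ∀ T : Finset (Fin n), T.card ≤ n - ℓ → c T = 0 := by
      intro T hT
      have hcompl : T.card + Tᶜ.card = n := by simpa using Finset.card_add_card_compl T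
      have hmem : eps b Tᶜ ∈ m ^ ℓ := by
        refine m_pow_anti hℓ1 (by omega) (A_pow_le_m_pow _ (eps_mem b Tᶜ))
      have h0 : x * eps b Tᶜ = 0 := hx _ hmem
      have hsum := lamTop_sum_mul b c T
      rw [hc, h0, map_zero] at hsum
      exact (mul_eq_zero.mp hsum.symm).resolve_right (lamTop_eps_mul_eps_compl_ne_zero b T)
    rw [← hc]
    refine Submodule.sum_mem _ fun S _ => ?_
    by_cases hcard : S.card ≤ n - ℓ
    · rw [key S hcard, zero_smul]
      exact Submodule.zero_mem _
    · exact Submodule.smul_mem _ _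
        (m_pow_anti (by omega) (by omega) (A_pow_le_m_pow _ (eps_mem b S)))
  · intro hx y hy
    have h1 : x * y ∈ m ^ (n - ℓ + 1) * m ^ ℓ := Submodule.mul_mem_mul hx hy
    rw [← pow_add, show n - ℓ + 1 + ℓ = n + 1 from by omega] at h1
    have h2 : m ^ (n + 1) ≤ ⊥ := by
      refine le_trans (m_pow_le _) ?_
      rw [A_pow_eq_bot hn, bot_mul]
    simpa using h2 h1
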